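/- Let A, B be positive definite n×n complex matrices and let x ∈ ℂⁿ be a nonzero vector. Then the function f(t) = ⟨(A ♯_t B)x, x⟩ is log-convex on [0,1]; that is, for all s, t ∈ [0,1] and λ ∈ [0,1], f(λs + (1−λ)t) ≤ f(s)^λ · f(t)^{1−λ}. -/

import Mathlib

open Matrix ComplexOrder

/-- Real power of a (Hermitian) matrix via the continuous functional calculus. -/
noncomputable def mrpow {n : ℕ} (A : Matrix (Fin n) (Fin n) ℂ) (t : ℝ) :
    Matrix (Fin n) (Fin n) ℂ :=
  cfc (fun x : ℝ => x ^ t) A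

/-- The weighted geometric mean `A ♯_t B = A^{1/2} (A^{-1/2} B A^{-1/2})^t A^{1/2}`. -/
noncomputable def geomMean {n : ℕ} (A B : Matrix (Fin n) (Fin n) ℂ) (t : ℝ) :
    Matrix (Fin n) (Fin n) ℂ :=
  mrpow A (1 / 2) * mrpow (mrpow A (-(1 / 2)) * B * mrpow A (-(1 / 2))) t * mrpow A (1 / 2)

/-- For positive definite `A, B` and a nonzero vector `x`, the function
`t ↦ ⟨(A ♯_t B)x, x⟩` is log-convex on `[0,1]`:
`f(λs + (1-λ)t) ≤ f(s)^λ · f(t)^{1-λ}`. -/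
-- Hölder-type: sum of weighted geometric means
lemma holder_aux {n : ℕ} (w a b : Fin n → ℝ) (hw : ∀ i, 0 ≤ w i) (ha : ∀ i, 0 ≤ a i)
    (hb : ∀ i, 0 ≤ b i) {l : ℝ} (hl0 : 0 ≤ l) (hl1 : l ≤ 1) :
    ∑ i, w i * (a i ^ l * b i ^ (1 - l)) ≤
      (∑ i, w i * a i) ^ l * (∑ i, w i * b i) ^ (1 - l) := by
  rcases eq_or_lt_of_le hl0 with h0 | h0
  · simp [← h0]
  rcases eq_or_lt_of_le hl1 with h1 | h1
  · simp [h1]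
  have hl1' : 0 < 1 - l := by linarith
  have hpq : Real.HolderConjugate (1/l) (1/(1-l)) := by
    rw [one_div, one_div]; exact Real.HolderConjugate.inv_inv h0 hl1' (by ring)
  have H := Real.inner_le_Lp_mul_Lq_of_nonneg (Finset.univ) hpq
    (f := fun i => (w i * a i) ^ l) (g := fun i => (w i * b i) ^ (1 - l))
    (fun i _ => Real.rpow_nonneg (mul_nonneg (hw i) (ha i)) _)
    (fun i _ => Real.rpow_nonneg (mul_nonneg (hw i) (hb i)) _)
  simp only [one_div_one_div] at H
  have e1 : ∀ i : Fin n, (w i * a i) ^ l * (w i * b i) ^ (1 - l)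
      = w i * (a i ^ l * b i ^ (1 - l)) := by
    intro i
    rw [Real.mul_rpow (hw i) (ha i), Real.mul_rpow (hw i) (hb i)]
    have hww : w i ^ l * w i ^ (1 - l) = w i := by
      rw [← Real.rpow_add' (hw i) (by norm_num)]
      simp
    calc w i ^ l * a i ^ l * (w i ^ (1 - l) * b i ^ (1 - l))
        = (w i ^ l * w i ^ (1 - l)) * (a i ^ l * b i ^ (1 - l)) := by ring
      _ = w i * (a i ^ l * b i ^ (1 - l)) := by rw [hww]
  have e2 : ∀ (c : Fin n → ℝ), (∀ i, 0 ≤ c i) → ∀ (r : ℝ), r ≠ 0 →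
      ∀ i : Fin n, ((w i * c i) ^ r) ^ (1/r) = w i * c i := by
    intro c hc r hr i
    rw [← Real.rpow_mul (mul_nonneg (hw i) (hc i)), mul_one_div_cancel hr, Real.rpow_one]
  simp only [e1, e2 a ha l h0.ne', e2 b hb (1-l) hl1'.ne'] at H
  exact H

-- spectral expansion of quadratic form of cfc
lemma cfc_quadform {n : ℕ} {C : Matrix (Fin n) (Fin n) ℂ} (hC : C.IsHermitian) (f : ℝ → ℝ)
    (y : Fin n → ℂ) :
    (star y ⬝ᵥ (cfc f C *ᵥ y)).re =
      ∑ i, f (hC.eigenvalues i) *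
        Complex.normSq ((star (hC.eigenvectorUnitary : Matrix (Fin n) (Fin n) ℂ) *ᵥ y) i) := by
  rw [hC.cfc_eq, Matrix.IsHermitian.cfc, Unitary.conjStarAlgAut_apply]
  set U := (hC.eigenvectorUnitary : Matrix (Fin n) (Fin n) ℂ) with hU
  set z := star U *ᵥ y with hzdef
  have hsz : star z = star y ᵥ* U := by
    rw [hzdef, star_mulVec, star_eq_conjTranspose U, conjTranspose_conjTranspose]
  have key : star y ⬝ᵥ ((U * diagonal (RCLike.ofReal ∘ f ∘ hC.eigenvalues) * star U) *ᵥ y)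
      = star z ⬝ᵥ (diagonal (RCLike.ofReal ∘ f ∘ hC.eigenvalues) *ᵥ z) := by
    rw [← mulVec_mulVec, ← mulVec_mulVec, dotProduct_mulVec (star y) U, ← hsz, hzdef,
      dotProduct_mulVec, dotProduct_mulVec]
  rw [key]
  rw [dotProduct]
  rw [Complex.re_sum]
  refine Finset.sum_congr rfl fun i _ => ?_
  rw [mulVec_diagonal]
  simp only [Function.comp_apply, Pi.star_apply, Complex.star_def]
  rw [show (starRingEnd ℂ) (z i) * (RCLike.ofReal (f (hC.eigenvalues i)) * z i)
      = RCLike.ofReal (f (hC.eigenvalues i)) * (z i * (starRingEnd ℂ) (z i)) from by ring,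
    Complex.mul_conj]
  simp [Complex.mul_re]

lemma dot_conj {n : ℕ} {S : Matrix (Fin n) (Fin n) ℂ} (hS : S.IsHermitian)
    (M : Matrix (Fin n) (Fin n) ℂ) (x : Fin n → ℂ) :
    star x ⬝ᵥ ((S * M * S) *ᵥ x) = star (S *ᵥ x) ⬝ᵥ (M *ᵥ (S *ᵥ x)) := by
  have hsz : star (S *ᵥ x) = star x ᵥ* S := by rw [star_mulVec, hS.eq]
  rw [← mulVec_mulVec, ← mulVec_mulVec, dotProduct_mulVec (star x) S, ← hsz]

lemma dot_unitary_conj {n : ℕ} (U M : Matrix (Fin n) (Fin n) ℂ) (x : Fin n → ℂ) :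
    star x ⬝ᵥ ((U * M * star U) *ᵥ x) = star (star U *ᵥ x) ⬝ᵥ (M *ᵥ (star U *ᵥ x)) := by
  have hsz : star (star U *ᵥ x) = star x ᵥ* U := by
    rw [star_mulVec, star_eq_conjTranspose U, conjTranspose_conjTranspose]
  rw [← mulVec_mulVec, ← mulVec_mulVec, dotProduct_mulVec (star x) U, ← hsz]

lemma mrpow_posDef {n : ℕ} {A : Matrix (Fin n) (Fin n) ℂ} (hA : A.PosDef) (r : ℝ) :
    (mrpow A r).PosDef := by
  rw [posDef_iff_dotProduct_mulVec]
  constructor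
  · exact cfc_predicate _ A
  · intro x hx
    rw [mrpow, hA.1.cfc_eq, Matrix.IsHermitian.cfc, Unitary.conjStarAlgAut_apply, dot_unitary_conj]
    set U := (hA.1.eigenvectorUnitary : Matrix (Fin n) (Fin n) ℂ) with hU
    set z := star U *ᵥ x with hz
    have hUz : U *ᵥ z = x := by
      rw [hz, mulVec_mulVec, (Unitary.mem_iff.mp hA.1.eigenvectorUnitary.prop).2, one_mulVec]
    have hzne : z ≠ 0 := fun h => hx (by rw [← hUz, h, mulVec_zero])
    have hD : (diagonal (RCLike.ofReal ∘ (· ^ r) ∘ hA.1.eigenvalues) :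
        Matrix (Fin n) (Fin n) ℂ).PosDef := by
      refine Matrix.PosDef.diagonal fun i => ?_
      simp only [Function.comp_apply]
      exact Complex.zero_lt_real.mpr (Real.rpow_pos_of_pos (hA.eigenvalues_pos i) r)
    exact hD.dotProduct_mulVec_pos hzne

lemma posDef_conj {n : ℕ} {S B : Matrix (Fin n) (Fin n) ℂ} (hS : S.PosDef) (hB : B.PosDef) :
    (S * B * S).PosDef := by
  rw [posDef_iff_dotProduct_mulVec]
  constructor
  · have h := isHermitian_conjTranspose_mul_mul S hB.1
    rwa [hS.1.eq] at h
  · intro x hx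
    have hSx : S *ᵥ x ≠ 0 := fun h => by simpa [h] using hS.dotProduct_mulVec_pos hx
    rw [dot_conj hS.1]
    exact hB.dotProduct_mulVec_pos hSx

set_option maxHeartbeats 2000000 in
theorem stmt2 (n : ℕ) (A B : Matrix (Fin n) (Fin n) ℂ) (hA : A.PosDef) (hB : B.PosDef)
    (x : Fin n → ℂ) (hx : x ≠ 0) (s t l : ℝ)
    (hs : s ∈ Set.Icc (0 : ℝ) 1) (ht : t ∈ Set.Icc (0 : ℝ) 1)
    (hl : l ∈ Set.Icc (0 : ℝ) 1) :
    (star x ⬝ᵥ (geomMean A B (l * s + (1 - l) * t) *ᵥ x)).re ≤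
      (star x ⬝ᵥ (geomMean A B s *ᵥ x)).re ^ l *
        (star x ⬝ᵥ (geomMean A B t *ᵥ x)).re ^ (1 - l) := by
  have hR : (mrpow A (1 / 2)).PosDef := mrpow_posDef hA _
  have hS : (mrpow A (-(1 / 2))).PosDef := mrpow_posDef hA _
  have hC : (mrpow A (-(1 / 2)) * B * mrpow A (-(1 / 2))).PosDef := posDef_conj hS hB
  set C := mrpow A (-(1 / 2)) * B * mrpow A (-(1 / 2)) with hCdef
  set y := mrpow A (1 / 2) *ᵥ x with hy
  set z := star (hC.1.eigenvectorUnitary : Matrix (Fin n) (Fin n) ℂ) *ᵥ y with hz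
  set w : Fin n → ℝ := fun i => Complex.normSq (z i) with hw
  set ev : Fin n → ℝ := fun i => hC.1.eigenvalues i with hev
  have key : ∀ r : ℝ, (star x ⬝ᵥ (geomMean A B r *ᵥ x)).re = ∑ i, ev i ^ r * w i := by
    intro r
    rw [geomMean, ← hCdef, dot_conj hR.1, ← hy, mrpow, cfc_quadform hC.1 (fun u : ℝ => u ^ r) y]
  rw [key, key, key]
  have hwnn : ∀ i, 0 ≤ w i := fun i => Complex.normSq_nonneg _
  have hevp : ∀ i, 0 < ev i := fun i => hC.eigenvalues_pos i
  have e : ∀ i : Fin n, ev i ^ (l * s + (1 - l) * t) = (ev i ^ s) ^ l * (ev i ^ t) ^ (1 - l) := by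
    intro i
    rw [Real.rpow_add (hevp i), mul_comm l s, mul_comm (1 - l) t,
      Real.rpow_mul (hevp i).le, Real.rpow_mul (hevp i).le]
  simp only [e]
  have H := holder_aux w (fun i => ev i ^ s) (fun i => ev i ^ t) hwnn
    (fun i => Real.rpow_nonneg (hevp i).le s) (fun i => Real.rpow_nonneg (hevp i).le t)
    hl.1 hl.2
  simpa [mul_comm] using H
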